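/- If h : ℝ → ℝ is differentiable with bounded derivative, then the solution y of the Stein equation satisfies ‖y‖_∞ ≤ 2(1−ψ)⁻¹·‖h'‖_∞. -/

import Mathlib

open MeasureTheory ProbabilityTheory Real Set
open scoped NNReal ENNReal

noncomputable section

/-- `h̄_ψ = E h(N)` for `N ~ N(0, (1-ψ)⁻¹)`. -/
def gaussMean (ψ : ℝ) (h : ℝ → ℝ) : ℝ :=
  ∫ x, h x ∂(gaussianReal 0 (Real.toNNReal (1 - ψ)⁻¹))

/-- The bounded solution `y` of the Stein equation
`y'(x) - (1-ψ) x y(x) = h(x) - h̄_ψ`, given explicitly by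
`y(x) = -e^{(1-ψ)x²/2} ∫_x^∞ e^{-(1-ψ)t²/2} (h(t) - h̄_ψ) dt`. -/
def steinSol (ψ : ℝ) (h : ℝ → ℝ) (x : ℝ) : ℝ :=
  - Real.exp ((1 - ψ) * x ^ 2 / 2) *
      ∫ t in Set.Ioi x, Real.exp (-((1 - ψ) * t ^ 2 / 2)) * (h t - gaussMean ψ h)


lemma aux_int_abs {b : ℝ} (hb : 0 < b) :
    Integrable (fun t : ℝ => |t| * Real.exp (-b * t^2)) := by
  have := (integrable_mul_exp_neg_mul_sq hb).abs
  simpa [abs_mul, abs_of_pos (Real.exp_pos _)] using this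

lemma aux_ioi {b : ℝ} (hb : 0 < b) (x : ℝ) :
    ∫ t in Ioi x, t * Real.exp (-b * t^2) = Real.exp (-b * x^2) / (2*b) := by
  have hderiv : ∀ t ∈ Ici x, HasDerivAt (fun u : ℝ => -Real.exp (-b * u^2) / (2*b))
      (t * Real.exp (-b * t^2)) t := by
    intro t _
    have h1 : HasDerivAt (fun u : ℝ => -b * u^2) (-b * (2*t)) t := by
      simpa using ((hasDerivAt_pow 2 t).const_mul (-b))
    have h2 := (h1.exp).neg.div_const (2*b)
    refine h2.congr_deriv ?_
    rw [div_eq_iff (by positivity)]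
    ring
  have hint : IntegrableOn (fun t : ℝ => t * Real.exp (-b * t^2)) (Ioi x) :=
    (integrable_mul_exp_neg_mul_sq hb).integrableOn
  have htend : Filter.Tendsto (fun u : ℝ => -Real.exp (-b * u^2) / (2*b)) Filter.atTop (nhds 0) := by
    have h1 : Filter.Tendsto (fun u : ℝ => -b * u^2) Filter.atTop Filter.atBot := by
      apply Filter.Tendsto.const_mul_atTop_of_neg (neg_neg_iff_pos.mpr hb)
      exact Filter.tendsto_pow_atTop (by norm_num : (2:ℕ) ≠ 0)
    have := (Real.tendsto_exp_atBot.comp h1).neg.div_const (2*b)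
    simpa using this
  have := integral_Ioi_of_hasDerivAt_of_tendsto' hderiv hint htend
  rw [this]
  field_simp
  ring

lemma aux_shift {b x : ℝ} :
    ∫ t in Ioi x, Real.exp (-b * t^2) = ∫ t in Ioi (0:ℝ), Real.exp (-b * (t+x)^2) := by
  have hemb : MeasurableEmbedding (fun t : ℝ => t + x) :=
    (MeasurableEquiv.addRight x).measurableEmbedding
  have h1 := (measurePreserving_add_right volume x).setIntegral_preimage_emb hemb
    (fun t => Real.exp (-b * t^2)) (Ioi x)
  have hpre : (fun t : ℝ => t + x) ⁻¹' Ioi x = Ioi 0 := by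
    ext t; simp [lt_add_iff_pos_left]
  rw [hpre] at h1
  exact h1.symm

lemma aux_mills {b : ℝ} (hb : 0 < b) {x : ℝ} (hx : 0 ≤ x) :
    ∫ t in Ioi x, Real.exp (-b * t^2) ≤ Real.exp (-b * x^2) * (Real.sqrt (π/b) / 2) := by
  rw [aux_shift]
  have hle : ∫ t in Ioi (0:ℝ), Real.exp (-b * (t+x)^2)
      ≤ ∫ t in Ioi (0:ℝ), Real.exp (-b * x^2) * Real.exp (-b * t^2) := by
    apply setIntegral_mono_on
    · exact ((integrable_exp_neg_mul_sq hb).comp_add_right x).integrableOn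
    · exact ((integrable_exp_neg_mul_sq hb).const_mul _).integrableOn
    · exact measurableSet_Ioi
    · intro t ht
      rw [← Real.exp_add, Real.exp_le_exp]
      nlinarith [le_of_lt (show (0:ℝ) < t from ht), mul_nonneg (mul_nonneg hb.le (le_of_lt (show (0:ℝ) < t from ht))) hx]
  calc _ ≤ _ := hle
    _ = Real.exp (-b * x^2) * (Real.sqrt (π/b) / 2) := by
        rw [integral_const_mul, integral_gaussian_Ioi]

lemma aux_key {b : ℝ} (hb : 0 < b) (g : ℝ → ℝ) (hgc : Continuous g)
    (C m : ℝ) (hC : 0 ≤ C) (hm : 0 ≤ m) (hg : ∀ t, |g t| ≤ C * (|t| + m))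
    {x : ℝ} (hx : 0 ≤ x) :
    |∫ t in Ioi x, Real.exp (-b * t^2) * g t|
      ≤ Real.exp (-b * x^2) * (C * (1/(2*b) + m * (Real.sqrt (π/b) / 2))) := by
  have hBint : Integrable (fun t : ℝ => Real.exp (-b*t^2) * (C * (|t| + m))) volume := by
    have h1 := (aux_int_abs hb).const_mul C
    have h2 := (integrable_exp_neg_mul_sq hb).const_mul (C*m)
    have h3 := h1.add h2
    convert h3 using 2 with t
    · rfl
    simp only [Pi.add_apply]
    ring
  have hint : Integrable (fun t : ℝ => Real.exp (-b*t^2) * g t) volume := by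
    refine hBint.mono' ?_ (ae_of_all _ fun t => ?_)
    · exact ((Real.continuous_exp.comp (continuous_const.mul (continuous_pow 2))).mul hgc).aestronglyMeasurable
    · rw [Real.norm_eq_abs, abs_mul, abs_of_pos (Real.exp_pos _)]
      exact mul_le_mul_of_nonneg_left (hg t) (Real.exp_pos _).le
  have step1 : |∫ t in Ioi x, Real.exp (-b * t^2) * g t|
      ≤ ∫ t in Ioi x, Real.exp (-b*t^2) * (C * (|t| + m)) := by
    have habs := norm_integral_le_integral_norm (μ := volume.restrict (Ioi x))
      (fun t : ℝ => Real.exp (-b * t^2) * g t)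
    simp only [Real.norm_eq_abs] at habs
    refine le_trans habs ?_
    refine setIntegral_mono_on hint.abs.integrableOn hBint.integrableOn measurableSet_Ioi
      fun t _ => ?_
    rw [abs_mul, abs_of_pos (Real.exp_pos _)]
    exact mul_le_mul_of_nonneg_left (hg t) (Real.exp_pos _).le
  have step2 : ∫ t in Ioi x, Real.exp (-b*t^2) * (C * (|t| + m))
      = C * (∫ t in Ioi x, |t| * Real.exp (-b*t^2))
        + (C*m) * (∫ t in Ioi x, Real.exp (-b*t^2)) := by
    calc ∫ t in Ioi x, Real.exp (-b*t^2) * (C * (|t| + m))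
        = ∫ t in Ioi x, (C * (|t| * Real.exp (-b*t^2)) + (C*m) * Real.exp (-b*t^2)) :=
          integral_congr_ae (ae_of_all _ fun t => by ring)
      _ = (∫ t in Ioi x, C * (|t| * Real.exp (-b*t^2)))
          + ∫ t in Ioi x, (C*m) * Real.exp (-b*t^2) :=
          integral_add ((aux_int_abs hb).const_mul C).integrableOn
            ((integrable_exp_neg_mul_sq hb).const_mul (C*m)).integrableOn
      _ = C * (∫ t in Ioi x, |t| * Real.exp (-b*t^2))
          + (C*m) * (∫ t in Ioi x, Real.exp (-b*t^2)) := by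
          rw [integral_const_mul, integral_const_mul]
  have step3 : ∫ t in Ioi x, |t| * Real.exp (-b*t^2) = Real.exp (-b * x^2) / (2*b) := by
    rw [setIntegral_congr_fun measurableSet_Ioi
      (fun t (ht : x < t) => by rw [abs_of_pos (lt_of_le_of_lt hx ht)]), aux_ioi hb]
  have step4 := aux_mills hb hx
  calc |∫ t in Ioi x, Real.exp (-b * t^2) * g t|
      ≤ ∫ t in Ioi x, Real.exp (-b*t^2) * (C * (|t| + m)) := step1
    _ = C * (∫ t in Ioi x, |t| * Real.exp (-b*t^2))
        + (C*m) * (∫ t in Ioi x, Real.exp (-b*t^2)) := step2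
    _ = C * (Real.exp (-b * x^2) / (2*b)) + (C*m) * (∫ t in Ioi x, Real.exp (-b*t^2)) := by
        rw [step3]
    _ ≤ C * (Real.exp (-b * x^2) / (2*b)) + (C*m) * (Real.exp (-b*x^2) * (Real.sqrt (π/b) / 2)) :=
        add_le_add_right (mul_le_mul_of_nonneg_left step4 (mul_nonneg hC hm)) _
    _ = Real.exp (-b * x^2) * (C * (1/(2*b) + m * (Real.sqrt (π/b) / 2))) := by ring

lemma aux_pdf_coe (v : ℝ≥0) :
    gaussianPDF 0 v = fun x => ((Real.toNNReal (gaussianPDFReal 0 v x) : ℝ≥0) : ℝ≥0∞) := by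
  ext x
  rw [gaussianPDF_def]
  rfl

lemma aux_gauss_int {v : ℝ≥0} (hv : v ≠ 0) (f : ℝ → ℝ) :
    ∫ x, f x ∂(gaussianReal 0 v) = ∫ x, gaussianPDFReal 0 v x * f x := by
  rw [gaussianReal_of_var_ne_zero 0 hv, aux_pdf_coe,
    integral_withDensity_eq_integral_smul ((measurable_gaussianPDFReal 0 v).real_toNNReal) f]
  refine integral_congr_ae (ae_of_all _ fun x => ?_)
  simp [NNReal.smul_def, Real.coe_toNNReal _ (gaussianPDFReal_nonneg 0 v x)]

lemma aux_gauss_integrable {v : ℝ≥0} (hv : v ≠ 0) {f : ℝ → ℝ}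
    (hf : Integrable (fun x => gaussianPDFReal 0 v x * f x)) :
    Integrable f (gaussianReal 0 v) := by
  rw [gaussianReal_of_var_ne_zero 0 hv, aux_pdf_coe,
    integrable_withDensity_iff_integrable_smul ((measurable_gaussianPDFReal 0 v).real_toNNReal)]
  refine hf.congr (ae_of_all _ fun x => ?_)
  simp [NNReal.smul_def, Real.coe_toNNReal _ (gaussianPDFReal_nonneg 0 v x)]



theorem stmt12 (ψ : ℝ) (hψ0 : 0 ≤ ψ) (hψ1 : ψ < 1) (h : ℝ → ℝ) (hdiff : Differentiable ℝ h) (C : ℝ) (hC : ∀ x, |deriv h x| ≤ C) :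
    ∀ x : ℝ, |steinSol ψ h x| ≤ 2 / (1 - ψ) * C := by
  intro x
  have ha0 : (0:ℝ) < 1 - ψ := by linarith
  set b : ℝ := (1 - ψ) / 2 with hbdef
  have hb : 0 < b := by positivity
  set v : ℝ≥0 := Real.toNNReal (1 - ψ)⁻¹ with hvdef
  have hvr : (v:ℝ) = (2*b)⁻¹ := by
    rw [hvdef, Real.coe_toNNReal _ (inv_nonneg.mpr ha0.le), hbdef]
    norm_num
  have hvne : v ≠ 0 := (Real.toNNReal_pos.mpr (inv_pos.mpr ha0)).ne'
  have hsq : (0:ℝ) < Real.sqrt (π/b) := Real.sqrt_pos.mpr (by positivity)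
  set c : ℝ := (Real.sqrt (π/b))⁻¹ with hcdef
  have hc0 : 0 < c := by positivity
  have hpdf : ∀ t : ℝ, gaussianPDFReal 0 v t = c * Real.exp (-b * t^2) := by
    intro t
    simp only [gaussianPDFReal, hvr]
    have e1 : 2 * π * (2*b)⁻¹ = π / b := by field_simp
    have e2 : -(t - 0)^2 / (2 * (2*b)⁻¹) = -b * t^2 := by field_simp; ring
    rw [e1, e2, hcdef]
  have hC0 : 0 ≤ C := le_trans (abs_nonneg _) (hC 0)
  have hlip : ∀ s t : ℝ, |h s - h t| ≤ C * |s - t| := by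
    have hl : LipschitzWith C.toNNReal h := by
      refine lipschitzWith_of_nnnorm_deriv_le hdiff fun t => ?_
      rw [← NNReal.coe_le_coe, coe_nnnorm, Real.coe_toNNReal _ hC0, Real.norm_eq_abs]
      exact hC t
    intro s t
    have := hl.dist_le_mul s t
    rwa [Real.dist_eq, Real.dist_eq, Real.coe_toNNReal _ hC0] at this
  have hcont : Continuous h := hdiff.continuous
  have habs : ∀ t : ℝ, |h t| ≤ |h 0| + C * |t| := by
    intro t
    calc |h t| = |(h t - h 0) + h 0| := by ring_nf
      _ ≤ |h t - h 0| + |h 0| := abs_add_le _ _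
      _ ≤ C * |t - 0| + |h 0| := add_le_add_left (hlip t 0) _
      _ = |h 0| + C * |t| := by rw [sub_zero]; ring
  have Ie : Integrable (fun t : ℝ => Real.exp (-b * t^2)) := integrable_exp_neg_mul_sq hb
  have Iabse : Integrable (fun t : ℝ => |t| * Real.exp (-b * t^2)) := aux_int_abs hb
  have Ieh : Integrable (fun t : ℝ => Real.exp (-b * t^2) * h t) := by
    refine ((Ie.const_mul |h 0|).add (Iabse.const_mul C)).mono'
      ((Real.continuous_exp.comp (continuous_const.mul (continuous_pow 2))).mul hcont).aestronglyMeasurable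
      (ae_of_all _ fun t => ?_)
    rw [Real.norm_eq_abs, abs_mul, abs_of_pos (Real.exp_pos _)]
    calc Real.exp (-b * t^2) * |h t| ≤ Real.exp (-b * t^2) * (|h 0| + C * |t|) :=
          mul_le_mul_of_nonneg_left (habs t) (Real.exp_pos _).le
      _ = |h 0| * Real.exp (-b * t^2) + C * (|t| * Real.exp (-b * t^2)) := by ring
  have Iabsν : Integrable (fun s : ℝ => |s|) (gaussianReal 0 v) :=
    aux_gauss_integrable hvne ((Iabse.const_mul c).congr (ae_of_all _ fun s => by
      simp only [hpdf]; ring))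
  have Ihν : Integrable h (gaussianReal 0 v) :=
    aux_gauss_integrable hvne ((Ieh.const_mul c).congr (ae_of_all _ fun s => by
      simp only [hpdf]; ring))
  have habs_total : ∫ s : ℝ, |s| * Real.exp (-b * s^2) = 1/b := by
    have h0 := integral_comp_abs (f := fun u : ℝ => u * Real.exp (-b * u^2))
    simp only [sq_abs] at h0
    rw [aux_ioi hb] at h0
    rw [h0]
    rw [show (-b * (0:ℝ)^2) = 0 by ring, Real.exp_zero]
    field_simp
  set m : ℝ := c / b with hmdef
  have hm0 : 0 ≤ m := by positivity
  have hmean : ∫ s, |s| ∂(gaussianReal 0 v) = m := by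
    rw [aux_gauss_int hvne]
    calc ∫ s : ℝ, gaussianPDFReal 0 v s * |s|
        = ∫ s : ℝ, c * (|s| * Real.exp (-b * s^2)) :=
          integral_congr_ae (ae_of_all _ fun s => by simp only [hpdf]; ring)
      _ = c * ∫ s : ℝ, |s| * Real.exp (-b * s^2) := integral_const_mul _ _
      _ = c * (1/b) := by rw [habs_total]
      _ = m := by rw [hmdef]; ring
  have hH : gaussMean ψ h = ∫ s, h s ∂(gaussianReal 0 v) := rfl
  have hB : ∀ t : ℝ, |h t - gaussMean ψ h| ≤ C * (|t| + m) := by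
    intro t
    have hsub : h t - gaussMean ψ h = ∫ s, (h t - h s) ∂(gaussianReal 0 v) := by
      rw [hH, integral_sub (integrable_const _) Ihν, integral_const]
      simp
    rw [hsub]
    have h1 : |∫ s, (h t - h s) ∂(gaussianReal 0 v)| ≤ ∫ s, |h t - h s| ∂(gaussianReal 0 v) := by
      simpa [Real.norm_eq_abs] using
        norm_integral_le_integral_norm (μ := gaussianReal 0 v) (fun s => h t - h s)
    refine le_trans h1 ?_
    calc ∫ s, |h t - h s| ∂(gaussianReal 0 v)
        ≤ ∫ s, C * (|t| + |s|) ∂(gaussianReal 0 v) :=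
          integral_mono (((integrable_const (h t)).sub Ihν).abs)
            (((integrable_const |t|).add Iabsν).const_mul C) fun s =>
            le_trans (hlip t s) (mul_le_mul_of_nonneg_left (abs_sub t s) hC0)
      _ = C * (|t| + m) := by
          rw [integral_const_mul, integral_add (integrable_const _) Iabsν, integral_const, hmean]
          simp
  have hzero : ∫ t : ℝ, Real.exp (-b * t^2) * (h t - gaussMean ψ h) = 0 := by
    have h1 : ∫ t : ℝ, gaussianPDFReal 0 v t * h t = gaussMean ψ h := by
      rw [hH, aux_gauss_int hvne]
    have h3 : ∫ t : ℝ, gaussianPDFReal 0 v t * h t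
        = c * ∫ t : ℝ, Real.exp (-b * t^2) * h t := by
      rw [← integral_const_mul]
      exact integral_congr_ae (ae_of_all _ fun t => by simp only [hpdf]; ring)
    rw [h3] at h1
    have h2 : ∫ t : ℝ, Real.exp (-b * t^2) * h t = gaussMean ψ h * Real.sqrt (π/b) := by
      rw [← h1, hcdef]
      field_simp
    calc ∫ t : ℝ, Real.exp (-b * t^2) * (h t - gaussMean ψ h)
        = (∫ t : ℝ, Real.exp (-b * t^2) * h t)
          - ∫ t : ℝ, Real.exp (-b * t^2) * gaussMean ψ h := by
          rw [← integral_sub Ieh (Ie.mul_const _)]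
          exact integral_congr_ae (ae_of_all _ fun t => by ring)
      _ = gaussMean ψ h * Real.sqrt (π/b) - Real.sqrt (π/b) * gaussMean ψ h := by
          rw [h2, integral_mul_const, integral_gaussian]
      _ = 0 := by ring
  set g : ℝ → ℝ := fun t => h t - gaussMean ψ h with hgdef
  have hgc : Continuous g := hcont.sub continuous_const
  have hexp : ∀ t : ℝ, Real.exp (-((1-ψ) * t^2 / 2)) = Real.exp (-b * t^2) := by
    intro t; congr 1; rw [hbdef]; ring
  have hexp2 : Real.exp ((1-ψ) * x^2 / 2) = Real.exp (b * x^2) := by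
    congr 1; rw [hbdef]; ring
  have hrw : steinSol ψ h x
      = - (Real.exp (b * x^2) * ∫ t in Ioi x, Real.exp (-b * t^2) * g t) := by
    show - Real.exp ((1 - ψ) * x ^ 2 / 2) *
        (∫ t in Set.Ioi x, Real.exp (-((1 - ψ) * t ^ 2 / 2)) * (h t - gaussMean ψ h)) = _
    rw [hexp2, neg_mul]
    congr 2
    exact integral_congr_ae (ae_of_all _ fun t => by simp only [hexp, hgdef])
  have hcm : C * (1/(2*b) + m * (Real.sqrt (π/b) / 2)) = 2 / (1-ψ) * C := by
    have hmv : m * (Real.sqrt (π/b) / 2) = 1/(2*b) := by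
      rw [hmdef, hcdef]
      field_simp
    rw [hmv, hbdef]
    field_simp
    ring
  have hBint : Integrable (fun t : ℝ => Real.exp (-b * t^2) * (C * (|t| + m))) := by
    have h3 := (Iabse.const_mul C).add (Ie.const_mul (C*m))
    convert h3 using 2 with t
    · rfl
    simp only [Pi.add_apply]
    ring
  have hFint : Integrable (fun t : ℝ => Real.exp (-b * t^2) * g t) := by
    refine hBint.mono'
      ((Real.continuous_exp.comp (continuous_const.mul (continuous_pow 2))).mul hgc).aestronglyMeasurable
      (ae_of_all _ fun t => ?_)
    rw [Real.norm_eq_abs, abs_mul, abs_of_pos (Real.exp_pos _)]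
    exact mul_le_mul_of_nonneg_left (hB t) (Real.exp_pos _).le
  rcases le_or_gt 0 x with hx | hx
  · have hkey := aux_key hb g hgc C m hC0 hm0 hB hx
    rw [hrw, abs_neg, abs_mul, abs_of_pos (Real.exp_pos _)]
    calc Real.exp (b * x^2) * |∫ t in Ioi x, Real.exp (-b * t^2) * g t|
        ≤ Real.exp (b * x^2) * (Real.exp (-b * x^2) * (C * (1/(2*b) + m * (Real.sqrt (π/b) / 2)))) :=
          mul_le_mul_of_nonneg_left hkey (Real.exp_pos _).le
      _ = C * (1/(2*b) + m * (Real.sqrt (π/b) / 2)) := by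
          rw [← mul_assoc, ← Real.exp_add, show b * x^2 + -b * x^2 = 0 by ring,
            Real.exp_zero, one_mul]
      _ = 2 / (1-ψ) * C := hcm
  · have hx' : (0:ℝ) ≤ -x := by linarith
    have hkey := aux_key hb (fun t => g (-t)) (hgc.comp continuous_neg) C m hC0 hm0
      (fun t => by simpa [abs_neg] using hB (-t)) hx'
    have hsplit : ∫ t in Ioi x, Real.exp (-b * t^2) * g t
        = - ∫ t in Iic x, Real.exp (-b * t^2) * g t := by
      have hsum := intervalIntegral.integral_Iic_add_Ioi (μ := volume) (b := x)
        (f := fun t : ℝ => Real.exp (-b * t^2) * g t) hFint.integrableOn hFint.integrableOn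
      rw [hzero] at hsum
      linarith
    have hrefl : ∫ t in Iic x, Real.exp (-b * t^2) * g t
        = ∫ t in Ioi (-x), Real.exp (-b * t^2) * g (-t) := by
      have h4 := integral_comp_neg_Ioi (-x) (fun t : ℝ => Real.exp (-b * t^2) * g t)
      rw [neg_neg] at h4
      rw [← h4]
      exact integral_congr_ae (ae_of_all _ fun t => by simp only [neg_sq])
    rw [hrw, abs_neg, abs_mul, abs_of_pos (Real.exp_pos _), hsplit, abs_neg, hrefl]
    calc Real.exp (b * x^2) * |∫ t in Ioi (-x), Real.exp (-b * t^2) * g (-t)|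
        ≤ Real.exp (b * x^2) *
            (Real.exp (-b * (-x)^2) * (C * (1/(2*b) + m * (Real.sqrt (π/b) / 2)))) :=
          mul_le_mul_of_nonneg_left hkey (Real.exp_pos _).le
      _ = C * (1/(2*b) + m * (Real.sqrt (π/b) / 2)) := by
          rw [neg_sq, ← mul_assoc, ← Real.exp_add, show b * x^2 + -b * x^2 = 0 by ring,
            Real.exp_zero, one_mul]
      _ = 2 / (1-ψ) * C := hcm


end
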